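/- Let W be a finite abelian ℓ-group that is a direct sum of r cyclic groups, and let m be the largest natural number such that the ℓ^m-torsion subgroup τ(W) = W[ℓ^m] is a free ℤ/ℓ^mℤ-module. Then the quotient W/τ(W) is a direct sum of at most r−1 cyclic groups (equivalently, W/τ(W) can be generated by at most r−1 elements). -/

import Mathlib

/-- The `m`-torsion subgroup `{w | m • w = 0}` of an abelian group. -/
def torsionSub (W : Type*) [AddCommGroup W] (m : ℕ) : AddSubgroup W where
  carrier := {x | m • x = 0}
  zero_mem' := by simp
  add_mem' := by
    intro a b ha hb
    simp only [Set.mem_setOf_eq] at *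
    rw [smul_add, ha, hb, add_zero]
  neg_mem' := by
    intro a ha
    simp only [Set.mem_setOf_eq] at *
    rw [smul_neg, ha, neg_zero]

/-- The `ℓ^m`-torsion subgroup of `W` is free as a `ℤ/ℓ^mℤ`-module (of some rank). -/
def IsFreeTor (ℓ : ℕ) (W : Type*) [AddCommGroup W] (m : ℕ) : Prop :=
  ∃ h : ℕ, Nonempty (torsionSub W (ℓ ^ m) ≃+ (Fin h → ZMod (ℓ ^ m)))

lemma mem_torsionSub {W : Type*} [AddCommGroup W] {m : ℕ} {x : W} :
    x ∈ torsionSub W m ↔ m • x = 0 := Iff.rfl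

noncomputable def zmodTorsionEquiv (n k : ℕ) (hk : 0 < k) (hn : 0 < n) (hdvd : k ∣ n) :
    (torsionSub (ZMod n) k) ≃+ ZMod k := by
  haveI : NeZero n := ⟨hn.ne'⟩
  haveI : NeZero k := ⟨hk.ne'⟩
  set d : ℕ := n / k with hdef
  have hd : k * d = n := Nat.mul_div_cancel' hdvd
  set c : ZMod n := (d : ZMod n) with hc
  have hfk : (zmultiplesHom (ZMod n) c) (k : ℤ) = 0 := by
    have h1 : ((k:ℤ)) • (d : ZMod n) = ((k * d : ℕ) : ZMod n) := by
      push_cast [zsmul_eq_mul]; ring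
    simp only [zmultiplesHom_apply, hc, h1, hd, ZMod.natCast_self]
  set f : ZMod k →+ ZMod n := ZMod.lift k ⟨zmultiplesHom (ZMod n) c, hfk⟩ with hf
  have hfint : ∀ z : ℤ, f (z : ZMod k) = z • c := fun z => by
    simp [hf, ZMod.lift_coe, zmultiplesHom_apply]
  have hmem : ∀ x : ZMod k, f x ∈ torsionSub (ZMod n) k := by
    intro x
    rw [mem_torsionSub, ← map_nsmul f k x]
    have : (k : ℕ) • x = 0 := by simp [nsmul_eq_mul, ZMod.natCast_self]
    rw [this, map_zero]
  set g : ZMod k →+ torsionSub (ZMod n) k :=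
    { toFun := fun x => ⟨f x, hmem x⟩
      map_zero' := by ext; simp
      map_add' := fun a b => by ext; simp } with hg
  have hd0 : 0 < d := by
    rcases Nat.eq_zero_or_pos d with h | h
    · rw [h, mul_zero] at hd; exact absurd hd.symm hn.ne'
    · exact h
  have hval : ∀ x : ZMod k, (((x.val : ℤ) : ZMod k)) = x := fun x => by
    push_cast [ZMod.natCast_val, ZMod.cast_id]
    ring
  have hinj : Function.Injective g := by
    intro a b hab
    have h1 : f a = f b := congrArg (fun x => (x : ZMod n)) (Subtype.ext_iff.mp hab)
    have h2 : f (((a - b).val : ℤ) : ZMod k) = 0 := by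
      rw [hval, map_sub, h1, sub_self]
    rw [hfint] at h2
    have h3 : (((a - b).val * d : ℕ) : ZMod n) = 0 := by
      push_cast [zsmul_eq_mul] at h2 ⊢
      rw [← h2]
    have h4 : n ∣ (a - b).val * d := (ZMod.natCast_eq_zero_iff _ _).mp h3
    rw [← hd] at h4
    have h5 : k ∣ (a - b).val := (Nat.mul_dvd_mul_iff_right hd0).mp h4
    have h6 : a - b = 0 := by
      have := (ZMod.natCast_eq_zero_iff (a-b).val k).mpr h5
      rwa [ZMod.natCast_val, ZMod.cast_id] at this
    exact sub_eq_zero.mp h6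
  have hsurj : Function.Surjective g := by
    rintro ⟨x, hx⟩
    rw [mem_torsionSub] at hx
    have h1 : ((k * x.val : ℕ) : ZMod n) = 0 := by
      push_cast [ZMod.natCast_val, ZMod.cast_id]
      rw [← hx]; push_cast [nsmul_eq_mul]; ring
    have h2 : n ∣ k * x.val := (ZMod.natCast_eq_zero_iff _ _).mp h1
    have h3 : d ∣ x.val := (Nat.mul_dvd_mul_iff_left hk).mp (by rw [hd]; exact h2)
    obtain ⟨t, ht⟩ := h3
    refine ⟨((t : ℤ) : ZMod k), ?_⟩
    apply Subtype.ext
    show f _ = x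
    rw [hfint]
    have : ((t:ℤ)) • c = ((d * t : ℕ) : ZMod n) := by push_cast [zsmul_eq_mul, hc]; ring
    rw [this, ← ht, ZMod.natCast_val, ZMod.cast_id]
  exact (AddEquiv.ofBijective g ⟨hinj, hsurj⟩).symm

/-- transport torsion subgroup along an AddEquiv -/
def torsionCongr {W V : Type*} [AddCommGroup W] [AddCommGroup V] (e : W ≃+ V) (k : ℕ) :
    torsionSub W k ≃+ torsionSub V k where
  toFun x := ⟨e x, by
    rw [mem_torsionSub, ← map_nsmul e k x.1, (mem_torsionSub.mp x.2), map_zero]⟩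
  invFun y := ⟨e.symm y, by
    rw [mem_torsionSub, ← map_nsmul e.symm k y.1, (mem_torsionSub.mp y.2), map_zero]⟩
  left_inv x := by ext; simp
  right_inv y := by ext; simp
  map_add' x y := by ext; simp


/-- torsion of a product is product of torsions -/
def torsionPi {ι : Type*} (M : ι → Type*) [∀ i, AddCommGroup (M i)] (k : ℕ) :
    torsionSub (∀ i, M i) k ≃+ ∀ i, torsionSub (M i) k where
  toFun x i := ⟨x.1 i, by
    have := mem_torsionSub.mp x.2
    rw [mem_torsionSub]
    exact congrFun this i⟩
  invFun y := ⟨fun i => (y i).1, by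
    rw [mem_torsionSub]
    funext i
    exact mem_torsionSub.mp (y i).2⟩
  left_inv x := by ext; rfl
  right_inv y := by ext; rfl
  map_add' x y := by ext; rfl

/-- Let `W` be a finite abelian `ℓ`-group that is a direct sum of `r` nontrivial cyclic
groups, and let `m` be the largest natural number such that `τ(W) = W[ℓ^m]` is a free
`ℤ/ℓ^mℤ`-module.  Then `W/τ(W)` can be generated by at most `r − 1` elements. -/
theorem quotient_by_free_torsion_gens (ℓ : ℕ) (hℓ : ℓ.Prime) (r : ℕ)
    (W : Type*) [AddCommGroup W]
    (e : Fin r → ℕ) (he : ∀ i, 1 ≤ e i)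
    (hiso : Nonempty (W ≃+ ∀ i : Fin r, ZMod (ℓ ^ e i)))
    (m : ℕ) (hfree : IsFreeTor ℓ W m)
    (hmax : ∀ m', IsFreeTor ℓ W m' → m' ≤ m) :
    ∃ S : Finset (W ⧸ torsionSub W (ℓ ^ m)),
      S.card ≤ r - 1 ∧ AddSubgroup.closure (S : Set (W ⧸ torsionSub W (ℓ ^ m))) = ⊤ := by
  classical
  obtain ⟨g⟩ := hiso
  rcases Nat.eq_zero_or_pos r with hr | hr
  · -- r = 0 : contradiction with maximality
    exfalso
    subst hr
    haveI : Subsingleton (∀ i : Fin 0, ZMod (ℓ ^ e i)) := by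
      constructor; intro a b; funext i; exact i.elim0
    haveI : Subsingleton W := g.toEquiv.subsingleton
    have hW : IsFreeTor ℓ W (m + 1) := by
      refine ⟨0, ⟨{ toFun := fun _ => 0
                    invFun := fun _ => 0
                    left_inv := fun x => Subsingleton.elim _ _
                    right_inv := fun x => funext fun i => i.elim0
                    map_add' := fun x y => by simp }⟩⟩
    have := hmax (m + 1) hW
    omega
  · obtain ⟨i₀, -, hi₀⟩ := Finset.exists_min_image Finset.univ e ⟨⟨0, hr⟩, Finset.mem_univ _⟩
    have hℓpos : 0 < ℓ := hℓ.pos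
    have hfr : IsFreeTor ℓ W (e i₀) := by
      refine ⟨r, ⟨((torsionCongr g _).trans ((torsionPi _ _).trans
        (AddEquiv.piCongrRight fun i => zmodTorsionEquiv (ℓ ^ e i) (ℓ ^ e i₀)
          (Nat.pow_pos hℓpos) (Nat.pow_pos hℓpos)
          (pow_dvd_pow ℓ (hi₀ i (Finset.mem_univ i))))))⟩⟩
    have hle : e i₀ ≤ m := hmax _ hfr
    set T := torsionSub W (ℓ ^ m) with hT
    set π : W →+ W ⧸ T := QuotientAddGroup.mk' T with hπ
    have hπsurj : Function.Surjective π := QuotientAddGroup.mk'_surjective T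
    set δ : Fin r → W := fun j => g.symm (Pi.single j 1) with hδ
    -- δ generates W
    have hgen : AddSubgroup.closure (Set.range δ) = ⊤ := by
      rw [eq_top_iff]
      intro w _
      have hw : w = ∑ j, ((g w j).val) • δ j := by
        apply g.injective
        rw [map_sum]
        have : ∀ j, g (((g w j).val) • δ j) = Pi.single j (g w j) := by
          intro j
          rw [map_nsmul, hδ]
          simp only [AddEquiv.apply_symm_apply]
          funext i
          by_cases h : i = j
          · subst h
            haveI : NeZero (ℓ ^ e i) := ⟨(Nat.pow_pos hℓpos).ne'⟩
            simp [Pi.single_eq_same, nsmul_eq_mul, mul_one, ZMod.natCast_val, ZMod.cast_id]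
          · simp [Pi.single_eq_of_ne h]
        simp_rw [this]
        exact (Finset.univ_sum_single (g w)).symm
      rw [hw]
      exact AddSubgroup.sum_mem _ (fun j _ => AddSubgroup.nsmul_mem _
        (AddSubgroup.subset_closure (Set.mem_range_self j)) _)
    -- δ i₀ is torsion
    have htor : δ i₀ ∈ T := by
      rw [hT, mem_torsionSub, hδ, ← map_nsmul]
      have h1 : (ℓ ^ m) • (Pi.single i₀ 1 : ∀ i, ZMod (ℓ ^ e i)) = 0 := by
        funext i
        by_cases h : i = i₀
        · subst h
          simp only [Pi.smul_apply, Pi.single_eq_same, Pi.zero_apply, nsmul_eq_mul, mul_one]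
          exact (ZMod.natCast_eq_zero_iff _ _).mpr (pow_dvd_pow ℓ hle)
        · simp [Pi.single_eq_of_ne h]
      rw [h1, map_zero]
    have hπδ : π (δ i₀) = 0 := (QuotientAddGroup.eq_zero_iff _).mpr htor
    refine ⟨Finset.image (fun j => π (δ j)) (Finset.univ.erase i₀), ?_, ?_⟩
    · calc (Finset.image (fun j => π (δ j)) (Finset.univ.erase i₀)).card
          ≤ (Finset.univ.erase i₀).card := Finset.card_image_le
        _ = r - 1 := by rw [Finset.card_erase_of_mem (Finset.mem_univ _)]; simp
    · rw [eq_top_iff]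
      have h2 : (⊤ : AddSubgroup (W ⧸ T)) = AddSubgroup.closure (π '' Set.range δ) := by
        rw [← AddMonoidHom.map_closure, hgen]
        exact (AddSubgroup.map_top_of_surjective π hπsurj).symm
      rw [h2]
      apply (AddSubgroup.closure_le _).mpr
      rintro x ⟨-, ⟨j, rfl⟩, rfl⟩
      by_cases h : j = i₀
      · subst h
        rw [hπδ]
        exact AddSubgroup.zero_mem _
      · exact AddSubgroup.subset_closure
          (Finset.mem_coe.mpr (Finset.mem_image_of_mem _ (Finset.mem_erase.mpr ⟨h, Finset.mem_univ _⟩)))
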